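/- Let D ⊆ ℝ, let h ≥ 0 and c > 0, and let f : D → ℤ satisfy f(j) − f(i) ≥ c·(j − i) for all i, j ∈ D with j ≥ i + h. Let T be a D-valued random variable with E|T|² < ∞ and E|f(T)|² < ∞. Then Var(f(T)) ≥ (c²/2)·(Var(T) − h²). -/

import Mathlib

open MeasureTheory ProbabilityTheory

lemma two_copy_var {Ω : Type*} [MeasurableSpace Ω] (μ : Measure Ω) [IsProbabilityMeasure μ]
    (X : Ω → ℝ) (hX : MemLp X 2 μ) :
    Integrable (fun z : Ω × Ω => (X z.1 - X z.2) ^ 2) (μ.prod μ) ∧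
      ∫ z : Ω × Ω, (X z.1 - X z.2) ^ 2 ∂(μ.prod μ) = 2 * variance X μ := by
  have hXi : Integrable X μ := hX.integrable (by norm_num)
  have hX2 : Integrable (fun x => X x ^ 2) μ := by
    have := hX.integrable_sq
    simpa [sq] using this
  have h1 : Integrable (fun z : Ω × Ω => X z.1 ^ 2 * (1 : ℝ)) (μ.prod μ) :=
    hX2.mul_prod (integrable_const 1)
  have h2 : Integrable (fun z : Ω × Ω => X z.1 * X z.2) (μ.prod μ) :=
    hXi.mul_prod hXi
  have h3 : Integrable (fun z : Ω × Ω => (1 : ℝ) * X z.2 ^ 2) (μ.prod μ) :=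
    (integrable_const 1).mul_prod hX2
  have h2' : Integrable (fun z : Ω × Ω => 2 * (X z.1 * X z.2)) (μ.prod μ) :=
    h2.const_mul 2
  have heq : (fun z : Ω × Ω => (X z.1 - X z.2) ^ 2) =
      fun z : Ω × Ω => X z.1 ^ 2 * (1 : ℝ) - 2 * (X z.1 * X z.2) + (1 : ℝ) * X z.2 ^ 2 := by
    funext z; ring
  have hint : Integrable (fun z : Ω × Ω => (X z.1 - X z.2) ^ 2) (μ.prod μ) := by
    rw [heq]; exact (h1.sub h2').add h3
  refine ⟨hint, ?_⟩
  have h12 : Integrable (fun z : Ω × Ω => X z.1 ^ 2 * (1 : ℝ) - 2 * (X z.1 * X z.2))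
      (μ.prod μ) := h1.sub h2'
  rw [heq, integral_add h12 h3]
  rw [integral_sub h1 h2', integral_const_mul, integral_prod_mul,
    integral_prod_mul (f := fun x => X x ^ 2) (g := fun _ => (1 : ℝ)),
    integral_prod_mul (f := fun _ => (1 : ℝ)) (g := fun x => X x ^ 2)]
  have hv : variance X μ = (∫ x, X x ^ 2 ∂μ) - (∫ x, X x ∂μ) ^ 2 := by
    have := variance_eq_sub hX
    simpa [sq] using this
  simp only [integral_const, measure_univ, ENNReal.toReal_one, smul_eq_mul, probReal_univ]
  rw [hv]; ring

/-- Let `D ⊆ ℝ`, `h ≥ 0`, `c > 0`, and let `f : D → ℤ` satisfy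
`f(j) − f(i) ≥ c (j − i)` whenever `i, j ∈ D` and `j ≥ i + h`.  If `T` is a
`D`-valued random variable with `E|T|² < ∞` and `E|f(T)|² < ∞`, then
`Var (f(T)) ≥ (c²/2) (Var T − h²)`. -/
theorem stmt_4 {Ω : Type*} [MeasurableSpace Ω] (μ : Measure Ω) [IsProbabilityMeasure μ]
    (D : Set ℝ) (h c : ℝ) (hh : 0 ≤ h) (hc : 0 < c) (f : ℝ → ℤ)
    (hf : ∀ i ∈ D, ∀ j ∈ D, i + h ≤ j → c * (j - i) ≤ (f j : ℝ) - (f i : ℝ))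
    (T : Ω → ℝ) (hTD : ∀ ω, T ω ∈ D) (hTmeas : Measurable T)
    (hT2 : MemLp T 2 μ) (hfTmeas : Measurable fun ω => (f (T ω) : ℝ))
    (hfT2 : MemLp (fun ω => (f (T ω) : ℝ)) 2 μ) :
    c ^ 2 / 2 * (variance T μ - h ^ 2) ≤ variance (fun ω => (f (T ω) : ℝ)) μ := by
  set F : Ω → ℝ := fun ω => (f (T ω) : ℝ) with hF
  -- pointwise inequality
  have hpt : ∀ a ∈ D, ∀ b ∈ D,
      c ^ 2 * ((b - a) ^ 2 - h ^ 2) ≤ ((f b : ℝ) - (f a : ℝ)) ^ 2 := by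
    intro a ha b hb
    rcases le_or_gt (a + h) b with hab | hab
    · have h1 := hf a ha b hb hab
      have h2 : 0 ≤ c * (b - a) := mul_nonneg hc.le (by linarith)
      nlinarith
    · rcases le_or_gt (b + h) a with hba | hba
      · have h1 := hf b hb a ha hba
        have h2 : 0 ≤ c * (a - b) := mul_nonneg hc.le (by linarith)
        nlinarith
      · have hsq : (b - a) ^ 2 ≤ h ^ 2 := by nlinarith
        have := mul_nonneg (sq_nonneg c) (by linarith : (0:ℝ) ≤ h ^ 2 - (b - a) ^ 2)
        nlinarith [sq_nonneg ((f b : ℝ) - (f a : ℝ))]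
  obtain ⟨hTint, hTeq⟩ := two_copy_var μ T hT2
  obtain ⟨hFint, hFeq⟩ := two_copy_var μ F hfT2
  have hmono : ∫ z : Ω × Ω, c ^ 2 * ((T z.1 - T z.2) ^ 2 - h ^ 2) ∂(μ.prod μ) ≤
      ∫ z : Ω × Ω, (F z.1 - F z.2) ^ 2 ∂(μ.prod μ) := by
    refine integral_mono ?_ hFint ?_
    · exact ((hTint.sub (integrable_const (h ^ 2))).const_mul _)
    · intro z
      exact hpt (T z.2) (hTD z.2) (T z.1) (hTD z.1)
  have hlhs : ∫ z : Ω × Ω, c ^ 2 * ((T z.1 - T z.2) ^ 2 - h ^ 2) ∂(μ.prod μ) =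
      c ^ 2 * (2 * variance T μ - h ^ 2) := by
    rw [integral_const_mul, integral_sub hTint (integrable_const (h ^ 2)), hTeq]
    simp [measure_univ]
  rw [hlhs, hFeq] at hmono
  have hvT : 0 ≤ variance T μ := variance_nonneg T μ
  nlinarith [sq_nonneg c]
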